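/- Let ρ∞ > 0, θ∞ > 0, u∞ < 0, r > 0 and 0 < δ < r²/2. Then there exists a constant C > 0 such that for every Φ ∈ [0, δ] and every ξ = (ξ₁, ξ') ∈ ℝ³ with ξ₁ ≤ −r, setting ζ₁ := −√(ξ₁² − 2Φ), one has: (i) M∞(ζ₁, ξ') ≤ C M∞(ξ); (ii) (|ζ₁ − u∞|/θ∞) M∞(ζ₁, ξ') ≤ C (1 + |ξ₁|) M∞(ξ); (iii) |(ζ₁ − u∞)²/θ∞² − 1/θ∞| · M∞(ζ₁, ξ') ≤ C (1 + |ξ₁|²) M∞(ξ). (Note that −(η₁−u∞)/θ∞ · M∞(η) and ((η₁−u∞)²/θ∞² − 1/θ∞) M∞(η) are the first and second partial derivatives of M∞ in the first velocity variable, so these are the estimates |∂_{ξ₁}M∞(ζ₁,ξ')| ≤ C(1+|ξ₁|)M∞(ξ) and |∂_{ξ₁ξ₁}M∞(ζ₁,ξ')| ≤ C(1+|ξ₁|²)M∞(ξ).) -/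

import Mathlib

open MeasureTheory Real Set Filter

/-- The Maxwellian `M∞` with parameters `ρ∞, θ∞, u∞`, where `ξ = (ξ₁, ξ₂, ξ₃)`. -/
noncomputable def Maxwellian (ρ θ u : ℝ) (ξ : ℝ × ℝ × ℝ) : ℝ :=
  ρ * (2 * π * θ) ^ (-(3:ℝ)/2) *
    Real.exp (-(((ξ.1 - u)^2 + ξ.2.1^2 + ξ.2.2^2) / (2 * θ)))

lemma maxwellian_nonneg (ρ θ u : ℝ) (hρ : 0 < ρ) (hθ : 0 < θ) (ξ : ℝ × ℝ × ℝ) :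
    0 ≤ Maxwellian ρ θ u ξ := by
  unfold Maxwellian
  have hπ := Real.pi_pos
  positivity

lemma maxwellian_ratio (ρ θ u : ℝ) (hρ : 0 < ρ) (hθ : 0 < θ) (c ζ ξ₁ ξ₂ ξ₃ : ℝ)
    (h : (ξ₁ - u)^2 - (ζ - u)^2 ≤ 2*θ*c) :
    Maxwellian ρ θ u (ζ, ξ₂, ξ₃) ≤ Real.exp c * Maxwellian ρ θ u (ξ₁, ξ₂, ξ₃) := by
  have hπ := Real.pi_pos
  unfold Maxwellian
  dsimp only
  have hA : (0:ℝ) < ρ * (2 * π * θ) ^ (-(3:ℝ)/2) := by positivity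
  have h2θ : (0:ℝ) < 2*θ := by linarith
  have harg : -(((ζ - u)^2 + ξ₂^2 + ξ₃^2) / (2*θ))
      ≤ c + -(((ξ₁ - u)^2 + ξ₂^2 + ξ₃^2) / (2*θ)) := by
    have hdiv : ((ξ₁ - u)^2 + ξ₂^2 + ξ₃^2) / (2*θ)
        - ((ζ - u)^2 + ξ₂^2 + ξ₃^2) / (2*θ) ≤ c := by
      rw [div_sub_div_same, show c = (2*θ*c)/(2*θ) by field_simp]
      gcongr
      linarith
    linarith
  have hexp : Real.exp (-(((ζ - u)^2 + ξ₂^2 + ξ₃^2) / (2*θ)))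
      ≤ Real.exp c * Real.exp (-(((ξ₁ - u)^2 + ξ₂^2 + ξ₃^2) / (2*θ))) := by
    rw [← Real.exp_add]
    exact Real.exp_le_exp.mpr harg
  calc ρ * (2 * π * θ) ^ (-(3:ℝ)/2) * Real.exp (-(((ζ - u)^2 + ξ₂^2 + ξ₃^2) / (2*θ)))
      ≤ ρ * (2 * π * θ) ^ (-(3:ℝ)/2) *
        (Real.exp c * Real.exp (-(((ξ₁ - u)^2 + ξ₂^2 + ξ₃^2) / (2*θ)))) :=
        mul_le_mul_of_nonneg_left hexp hA.le
    _ = Real.exp c * (ρ * (2 * π * θ) ^ (-(3:ℝ)/2) *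
        Real.exp (-(((ξ₁ - u)^2 + ξ₂^2 + ξ₃^2) / (2*θ)))) := by ring

set_option maxHeartbeats 1600000 in
/-- pointwise bounds on the shifted Maxwellian at `ζ₁ = -√(ξ₁² - 2Φ)`,
i.e. `M∞(ζ₁,ξ') ≤ C M∞(ξ)`, `|∂_{ξ₁}M∞(ζ₁,ξ')| ≤ C(1+|ξ₁|)M∞(ξ)`, and
`|∂_{ξ₁ξ₁}M∞(ζ₁,ξ')| ≤ C(1+|ξ₁|²)M∞(ξ)`. -/
theorem shifted_maxwellian_bounds
    (ρ θ u r δ : ℝ) (hρ : 0 < ρ) (hθ : 0 < θ) (hu : u < 0) (hr : 0 < r)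
    (hδ : 0 < δ) (hδr : δ < r^2 / 2) :
    ∃ C > 0, ∀ Φ ∈ Set.Icc (0:ℝ) δ, ∀ ξ₁ ξ₂ ξ₃ : ℝ, ξ₁ ≤ -r →
      (Maxwellian ρ θ u (-Real.sqrt (ξ₁^2 - 2*Φ), ξ₂, ξ₃)
          ≤ C * Maxwellian ρ θ u (ξ₁, ξ₂, ξ₃)) ∧
      ((|(-Real.sqrt (ξ₁^2 - 2*Φ)) - u| / θ) *
            Maxwellian ρ θ u (-Real.sqrt (ξ₁^2 - 2*Φ), ξ₂, ξ₃)
          ≤ C * (1 + |ξ₁|) * Maxwellian ρ θ u (ξ₁, ξ₂, ξ₃)) ∧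
      (|((-Real.sqrt (ξ₁^2 - 2*Φ)) - u)^2 / θ^2 - 1/θ| *
            Maxwellian ρ θ u (-Real.sqrt (ξ₁^2 - 2*Φ), ξ₂, ξ₃)
          ≤ C * (1 + |ξ₁|^2) * Maxwellian ρ θ u (ξ₁, ξ₂, ξ₃)) := by
  obtain ⟨K, hKdef⟩ : ∃ K : ℝ, K = 1 + (1 + |u|)/θ + 2*(1 + |u|)^2/θ^2 + 1/θ := ⟨_, rfl⟩
  have hKpos : 0 < K := by rw [hKdef]; positivity
  have hK1 : 1 ≤ K := by
    rw [hKdef]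
    have h1 : 0 ≤ (1 + |u|)/θ := by positivity
    have h2 : 0 ≤ 2*(1 + |u|)^2/θ^2 := by positivity
    have h3 : 0 ≤ 1/θ := by positivity
    linarith
  obtain ⟨E, hEdef⟩ : ∃ E : ℝ, E = Real.exp (δ/θ) := ⟨_, rfl⟩
  have hEpos : 0 < E := hEdef ▸ Real.exp_pos _
  refine ⟨E * K, by positivity, ?_⟩
  rintro Φ ⟨hΦ0, hΦδ⟩ ξ₁ ξ₂ ξ₃ hξ₁
  obtain ⟨ζ, hζdef⟩ : ∃ ζ : ℝ, ζ = -Real.sqrt (ξ₁^2 - 2*Φ) := ⟨_, rfl⟩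
  rw [← hζdef]
  have hξ1neg : ξ₁ ≤ 0 := by linarith
  have hr2 : r^2 ≤ ξ₁^2 := by nlinarith
  have hs : 0 ≤ ξ₁^2 - 2*Φ := by nlinarith
  have hζsq : ζ^2 = ξ₁^2 - 2*Φ := by rw [hζdef, neg_sq, Real.sq_sqrt hs]
  have hζle : |ζ| ≤ |ξ₁| := by
    rw [hζdef, abs_neg, abs_of_nonneg (Real.sqrt_nonneg _)]
    calc Real.sqrt (ξ₁^2 - 2*Φ) ≤ Real.sqrt (ξ₁^2) := Real.sqrt_le_sqrt (by linarith)
      _ = |ξ₁| := Real.sqrt_sq_eq_abs ξ₁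
  have hξζ : ξ₁ ≤ ζ := by
    have h1 := neg_abs_le ζ
    have h2 : |ξ₁| = -ξ₁ := abs_of_nonpos hξ1neg
    linarith
  have key : (ξ₁ - u)^2 - (ζ - u)^2 ≤ 2*θ*(δ/θ) := by
    have h0 : 2*θ*(δ/θ) = 2*δ := by field_simp
    have h1 : 0 ≤ (-u) * (ζ - ξ₁) := mul_nonneg (by linarith) (by linarith)
    rw [h0]; nlinarith
  have hMξ : 0 ≤ Maxwellian ρ θ u (ξ₁, ξ₂, ξ₃) := maxwellian_nonneg ρ θ u hρ hθ _
  have hMζ : 0 ≤ Maxwellian ρ θ u (ζ, ξ₂, ξ₃) := maxwellian_nonneg ρ θ u hρ hθ _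
  have hM : Maxwellian ρ θ u (ζ, ξ₂, ξ₃) ≤ E * Maxwellian ρ θ u (ξ₁, ξ₂, ξ₃) := by
    rw [hEdef]
    exact maxwellian_ratio ρ θ u hρ hθ (δ/θ) ζ ξ₁ ξ₂ ξ₃ key
  have habs : |ζ - u| ≤ (1 + |u|) * (1 + |ξ₁|) := by
    have h1 : |ζ - u| ≤ |ζ| + |u| := abs_sub ζ u
    have h2 : 0 ≤ |u| := abs_nonneg u
    have h3 : 0 ≤ |ξ₁| := abs_nonneg ξ₁
    nlinarith
  refine ⟨?_, ?_, ?_⟩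
  · -- part (i)
    calc Maxwellian ρ θ u (ζ, ξ₂, ξ₃) ≤ E * Maxwellian ρ θ u (ξ₁, ξ₂, ξ₃) := hM
      _ ≤ E * K * Maxwellian ρ θ u (ξ₁, ξ₂, ξ₃) :=
        mul_le_mul_of_nonneg_right (le_mul_of_one_le_right hEpos.le hK1) hMξ
  · -- part (ii)
    have hcoef : |ζ - u| / θ ≤ K * (1 + |ξ₁|) := by
      have h2 : (1 + |u|)/θ ≤ K := by
        rw [hKdef]
        have : 0 ≤ 1 + 2*(1 + |u|)^2/θ^2 + 1/θ := by positivity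
        linarith
      have h3 : (0:ℝ) ≤ 1 + |ξ₁| := by positivity
      calc |ζ - u| / θ ≤ ((1 + |u|) * (1 + |ξ₁|)) / θ := by gcongr
        _ = ((1 + |u|)/θ) * (1 + |ξ₁|) := by ring
        _ ≤ K * (1 + |ξ₁|) := mul_le_mul_of_nonneg_right h2 h3
    calc (|ζ - u| / θ) * Maxwellian ρ θ u (ζ, ξ₂, ξ₃)
        ≤ (K * (1 + |ξ₁|)) * (E * Maxwellian ρ θ u (ξ₁, ξ₂, ξ₃)) :=
          mul_le_mul hcoef hM hMζ (by positivity)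
      _ = E * K * (1 + |ξ₁|) * Maxwellian ρ θ u (ξ₁, ξ₂, ξ₃) := by ring
  · -- part (iii)
    have hcoef : |(ζ - u)^2 / θ^2 - 1/θ| ≤ K * (1 + |ξ₁|^2) := by
      have ha : 0 ≤ (ζ - u)^2 / θ^2 := by positivity
      have hb : 0 ≤ 1/θ := by positivity
      have h1 : |(ζ - u)^2 / θ^2 - 1/θ| ≤ (ζ - u)^2 / θ^2 + 1/θ := by
        rw [abs_le]; constructor <;> linarith
      have hsq : (ζ - u)^2 ≤ ((1 + |u|) * (1 + |ξ₁|))^2 := by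
        calc (ζ - u)^2 = |ζ - u|^2 := (sq_abs _).symm
          _ ≤ ((1 + |u|) * (1 + |ξ₁|))^2 := pow_le_pow_left₀ (abs_nonneg _) habs 2
      have ha2 : (1 + |ξ₁|)^2 ≤ 2*(1 + |ξ₁|^2) := by
        nlinarith [sq_nonneg (1 - |ξ₁|)]
      have h2 : ((1 + |u|) * (1 + |ξ₁|))^2 ≤ 2*(1 + |u|)^2 * (1 + |ξ₁|^2) := by
        calc ((1 + |u|) * (1 + |ξ₁|))^2 = (1 + |u|)^2 * (1 + |ξ₁|)^2 := by ring
          _ ≤ (1 + |u|)^2 * (2*(1 + |ξ₁|^2)) :=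
            mul_le_mul_of_nonneg_left ha2 (sq_nonneg _)
          _ = 2*(1 + |u|)^2 * (1 + |ξ₁|^2) := by ring
      have h3 : (ζ - u)^2 / θ^2 ≤ (2*(1 + |u|)^2/θ^2) * (1 + |ξ₁|^2) := by
        rw [div_mul_eq_mul_div]
        gcongr
        linarith [hsq, h2]
      have h4 : 1/θ ≤ (1/θ) * (1 + |ξ₁|^2) := by
        have h0 : (1:ℝ) ≤ 1 + |ξ₁|^2 := by have := sq_nonneg |ξ₁|; linarith
        nlinarith
      have h5 : 2*(1 + |u|)^2/θ^2 + 1/θ ≤ K := by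
        rw [hKdef]
        have : 0 ≤ 1 + (1 + |u|)/θ := by positivity
        linarith
      have h7 : (0:ℝ) ≤ 1 + |ξ₁|^2 := by positivity
      have h6 : (2*(1 + |u|)^2/θ^2) * (1 + |ξ₁|^2) + (1/θ) * (1 + |ξ₁|^2)
          ≤ K * (1 + |ξ₁|^2) := by
        have := mul_le_mul_of_nonneg_right h5 h7
        linarith
      linarith
    calc |(ζ - u)^2 / θ^2 - 1/θ| * Maxwellian ρ θ u (ζ, ξ₂, ξ₃)
        ≤ (K * (1 + |ξ₁|^2)) * (E * Maxwellian ρ θ u (ξ₁, ξ₂, ξ₃)) :=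
          mul_le_mul hcoef hM hMζ (by positivity)
      _ = E * K * (1 + |ξ₁|^2) * Maxwellian ρ θ u (ξ₁, ξ₂, ξ₃) := by ring
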